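/- Let G be a simple graph on Fin n and let A ∈ Matrix (Fin n) (Fin n) (ZMod 2) be its adjacency matrix over the field with two elements (A p q = 1 iff p and q are adjacent in G). Call a simple graph T on Fin n a complete tripartite graph (with isolated vertices allowed) if there exist pairwise disjoint sets V_A, V_B, V_C ⊆ Fin n such that two vertices are adjacent in T iff they lie in two distinct sets among V_A, V_B, V_C. Then the minimum natural number t such that there exist complete tripartite graphs T₁, …, T_t on Fin n with A = ∑_{i=1}^t A(T_i) in Matrix (Fin n) (Fin n) (ZMod 2) satisfies 2·t = rank(A), where rank(A) is the rank of A over ZMod 2; in particular the ZMod 2 rank of the adjacency matrix of any simple graph is even. -/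

import Mathlib

open scoped Classical in
/-- The adjacency matrix of a simple graph over `ZMod 2`. -/
noncomputable def adjMat2 (n : ℕ) (T : SimpleGraph (Fin n)) :
    Matrix (Fin n) (Fin n) (ZMod 2) :=
  Matrix.of fun p q => if T.Adj p q then 1 else 0

/-- A complete tripartite graph (with isolated vertices allowed): two vertices are adjacent iff
they lie in two distinct sets among three pairwise disjoint parts. -/
def IsCompleteTripartite (n : ℕ) (T : SimpleGraph (Fin n)) : Prop :=
  ∃ A B C : Set (Fin n), Disjoint A B ∧ Disjoint A C ∧ Disjoint B C ∧
    ∀ p q, T.Adj p q ↔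
      ((p ∈ A ∧ q ∈ B) ∨ (p ∈ B ∧ q ∈ A) ∨ (p ∈ A ∧ q ∈ C) ∨ (p ∈ C ∧ q ∈ A) ∨
        (p ∈ B ∧ q ∈ C) ∨ (p ∈ C ∧ q ∈ B))


open Matrix Submodule Module

noncomputable section

namespace Stmt11

lemma zmod2_eq_one : ∀ {x : ZMod 2}, x ≠ 0 → x = 1 := by decide
lemma zmod2_eq_zero : ∀ {x : ZMod 2}, x ≠ 1 → x = 0 := by decide
lemma zmod2_cases : ∀ x : ZMod 2, x = 0 ∨ x = 1 := by decide

def Smat {n : ℕ} (u v : Fin n → ZMod 2) : Matrix (Fin n) (Fin n) (ZMod 2) :=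
  vecMulVec u v + vecMulVec v u

lemma Smat_apply {n} (u v : Fin n → ZMod 2) (p q) :
    Smat u v p q = u p * v q + v p * u q := rfl

lemma Smat_symm_apply {n} (u v : Fin n → ZMod 2) (p q) :
    Smat u v q p = Smat u v p q := by
  simp only [Smat_apply]; ring

lemma Smat_diag {n} (u v : Fin n → ZMod 2) (p) : Smat u v p p = 0 := by
  have : u p * v p + v p * u p = 0 := by rw [mul_comm]; exact CharTwo.add_self_eq_zero _
  simpa [Smat_apply] using this

lemma Smat_mulVec {n} (u v c : Fin n → ZMod 2) :
    Smat u v *ᵥ c = (v ⬝ᵥ c) • u + (u ⬝ᵥ c) • v := by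
  funext i
  rw [Smat, add_mulVec]
  simp only [Pi.add_apply, mulVec, dotProduct, vecMulVec_apply, Pi.smul_apply, smul_eq_mul]
  rw [Finset.sum_mul, Finset.sum_mul]
  congr 1 <;> exact Finset.sum_congr rfl fun j _ => by ring

lemma range_add_le {n : ℕ} (M N : Matrix (Fin n) (Fin n) (ZMod 2)) :
    LinearMap.range (M + N).mulVecLin ≤
      LinearMap.range M.mulVecLin ⊔ LinearMap.range N.mulVecLin := by
  rintro _ ⟨c, rfl⟩
  rw [mulVecLin_apply, add_mulVec]
  exact add_mem (mem_sup_left ⟨c, rfl⟩) (mem_sup_right ⟨c, rfl⟩)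

lemma rank_add_le {n : ℕ} (M N : Matrix (Fin n) (Fin n) (ZMod 2)) :
    (M + N).rank ≤ M.rank + N.rank :=
  le_trans (Submodule.finrank_mono (range_add_le M N))
    (Submodule.finrank_add_le_finrank_add_finrank _ _)

lemma rank_sum_le {n : ℕ} {ι : Type*} (s : Finset ι) (f : ι → Matrix (Fin n) (Fin n) (ZMod 2)) :
    (∑ i ∈ s, f i).rank ≤ ∑ i ∈ s, (f i).rank := by
  induction s using Finset.cons_induction with
  | empty => simp
  | cons a s ha ih =>
    rw [Finset.sum_cons, Finset.sum_cons]
    exact le_trans (rank_add_le _ _) (add_le_add_right ih _)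

lemma finrank_span_singleton_le {n : ℕ} (u : Fin n → ZMod 2) :
    finrank (ZMod 2) (span (ZMod 2) ({u} : Set (Fin n → ZMod 2))) ≤ 1 := by
  rcases eq_or_ne u 0 with rfl | h
  · rw [Submodule.span_zero_singleton]
    simp
  · rw [finrank_span_singleton h]

lemma rank_Smat_le {n : ℕ} (u v : Fin n → ZMod 2) : (Smat u v).rank ≤ 2 := by
  have h : LinearMap.range (Smat u v).mulVecLin ≤ span (ZMod 2) {u, v} := by
    rintro _ ⟨c, rfl⟩
    rw [mulVecLin_apply, Smat_mulVec]
    exact add_mem (smul_mem _ _ (subset_span (by simp))) (smul_mem _ _ (subset_span (by simp)))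
  refine le_trans (Submodule.finrank_mono h) ?_
  rw [show ({u, v} : Set (Fin n → ZMod 2)) = insert u {v} from rfl, Submodule.span_insert]
  exact le_trans (Submodule.finrank_add_le_finrank_add_finrank _ _)
    (add_le_add (finrank_span_singleton_le u) (finrank_span_singleton_le v))


lemma decomp {n : ℕ} : ∀ (r : ℕ) (A : Matrix (Fin n) (Fin n) (ZMod 2)),
    (∀ i j, A i j = A j i) → (∀ p, A p p = 0) → A.rank = r →
    ∃ (k : ℕ) (u v : Fin k → Fin n → ZMod 2), r = 2 * k ∧ A = ∑ i, Smat (u i) (v i) := by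
  intro r
  induction r using Nat.strong_induction_on with
  | _ r ih =>
  intro A hsym hdiag hrank
  by_cases hA : A = 0
  · refine ⟨0, ![], ![], ?_, ?_⟩
    · rw [← hrank, hA, Matrix.rank_zero]
    · simp [hA]
  · have hex : ∃ p q, A p q ≠ 0 := by
      by_contra h
      push_neg at h
      exact hA (by ext i j; simpa using h i j)
    obtain ⟨p, q, hpq⟩ := hex
    have hpq1 : A p q = 1 := zmod2_eq_one hpq
    have hqp1 : A q p = 1 := (hsym q p).trans hpq1
    set u : Fin n → ZMod 2 := fun x => A x q with hu
    set v : Fin n → ZMod 2 := fun x => A x p with hv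
    have hup : u p = 1 := hpq1
    have huq : u q = 0 := hdiag q
    have hvp : v p = 0 := hdiag p
    have hvq : v q = 1 := hqp1
    set A' : Matrix (Fin n) (Fin n) (ZMod 2) := A + Smat u v with hA'
    have hAdd : A = A' + Smat u v := by
      ext i j
      rw [hA']
      simp only [Matrix.add_apply]
      rw [add_assoc, CharTwo.add_self_eq_zero, add_zero]
    have hcolp : ∀ x, A' x p = 0 := by
      intro x
      rw [hA']
      simp only [Matrix.add_apply, Smat_apply, hvp, hup, mul_zero, mul_one, zero_add]
      exact CharTwo.add_self_eq_zero _
    have hcolq : ∀ x, A' x q = 0 := by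
      intro x
      rw [hA']
      simp only [Matrix.add_apply, Smat_apply, huq, hvq, mul_zero, mul_one, add_zero]
      exact CharTwo.add_self_eq_zero _
    have hsym' : ∀ i j, A' i j = A' j i := by
      intro i j
      rw [hA']
      simp only [Matrix.add_apply, hsym i j, Smat_symm_apply]
    have hdiag' : ∀ x, A' x x = 0 := by
      intro x
      rw [hA']
      simp [Matrix.add_apply, hdiag x, Smat_diag]
    -- submodules
    set W : Submodule (ZMod 2) (Fin n → ZMod 2) := LinearMap.range A.mulVecLin with hW
    set W' : Submodule (ZMod 2) (Fin n → ZMod 2) := LinearMap.range A'.mulVecLin with hW'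
    set U : Submodule (ZMod 2) (Fin n → ZMod 2) := span (ZMod 2) (Set.range ![u, v]) with hUdef
    have hUpair : U = span (ZMod 2) {u, v} := by
      rw [hUdef]
      congr 1
      ext x
      simp [Fin.exists_fin_two, eq_comm, or_comm]
    have huW : u ∈ W := by
      refine ⟨Pi.single q 1, ?_⟩
      funext x
      rw [Matrix.mulVecLin_apply, Matrix.mulVec_single]
      simp [hu]
    have hvW : v ∈ W := by
      refine ⟨Pi.single p 1, ?_⟩
      funext x
      rw [Matrix.mulVecLin_apply, Matrix.mulVec_single]
      simp [hv]
    have hSW : ∀ c, Smat u v *ᵥ c ∈ W := by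
      intro c
      rw [Smat_mulVec]
      exact add_mem (smul_mem _ _ huW) (smul_mem _ _ hvW)
    have hW'W : W' ≤ W := by
      rintro _ ⟨c, rfl⟩
      rw [Matrix.mulVecLin_apply, hA', Matrix.add_mulVec]
      exact add_mem ⟨c, rfl⟩ (hSW c)
    have hUW : U ≤ W := by
      rw [hUpair]
      refine span_le.2 ?_
      rintro x hx
      rcases hx with rfl | hx
      · exact huW
      · rcases hx with rfl
        exact hvW
    have hWle : W ≤ W' ⊔ U := by
      rintro _ ⟨c, rfl⟩
      rw [Matrix.mulVecLin_apply]
      rw [show A *ᵥ c = A' *ᵥ c + Smat u v *ᵥ c by rw [← Matrix.add_mulVec, ← hAdd]]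
      refine add_mem (mem_sup_left ⟨c, rfl⟩) (mem_sup_right ?_)
      rw [Smat_mulVec, hUpair]
      exact add_mem (smul_mem _ _ (subset_span (by simp))) (smul_mem _ _ (subset_span (by simp)))
    have hWeq : W = W' ⊔ U := le_antisymm hWle (sup_le hW'W hUW)
    have hmemp : ∀ w ∈ W', w p = 0 := by
      rintro _ ⟨c, rfl⟩
      rw [Matrix.mulVecLin_apply]
      show A' p ⬝ᵥ c = 0
      apply Finset.sum_eq_zero
      intro j _
      rw [hsym' p j, hcolp j, zero_mul]
    have hmemq : ∀ w ∈ W', w q = 0 := by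
      rintro _ ⟨c, rfl⟩
      rw [Matrix.mulVecLin_apply]
      show A' q ⬝ᵥ c = 0
      apply Finset.sum_eq_zero
      intro j _
      rw [hsym' q j, hcolq j, zero_mul]
    have hdisj : W' ⊓ U = ⊥ := by
      rw [eq_bot_iff]
      rintro w hw
      rw [Submodule.mem_inf] at hw
      obtain ⟨hw1, hw2⟩ := hw
      rw [hUpair, Submodule.mem_span_pair] at hw2
      obtain ⟨a, b, rfl⟩ := hw2
      have h1 : a = 0 := by
        have := hmemp _ hw1
        simpa [hup, hvp] using this
      have h2 : b = 0 := by
        have := hmemq _ hw1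
        simpa [huq, hvq] using this
      simp [h1, h2]
    have hli : LinearIndependent (ZMod 2) ![u, v] := by
      rw [LinearIndependent.pair_iff]
      intro s t hst
      constructor
      · have := congrFun hst p
        simpa [hup, hvp] using this
      · have := congrFun hst q
        simpa [huq, hvq] using this
    have hU2 : finrank (ZMod 2) U = 2 := by
      rw [hUdef, finrank_span_eq_card hli]
      simp
    have hrankeq : A.rank = A'.rank + 2 := by
      have h := Submodule.finrank_sup_add_finrank_inf_eq W' U
      rw [hdisj, finrank_bot, add_zero, hU2] at h
      show finrank (ZMod 2) W = _
      rw [hWeq, h]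
      rfl
    have hlt : A'.rank < r := by omega
    obtain ⟨k, u', v', hk, hsum⟩ := ih A'.rank hlt A' hsym' hdiag' rfl
    refine ⟨k + 1, Fin.cons u u', Fin.cons v v', by omega, ?_⟩
    rw [Fin.sum_univ_succ]
    simp only [Fin.cons_zero, Fin.cons_succ]
    rw [← hsum, hAdd, add_comm]

open scoped Classical in
def graphOf {n : ℕ} (u v : Fin n → ZMod 2) : SimpleGraph (Fin n) where
  Adj p q := Smat u v p q = 1
  symm := ⟨fun p q h => by
    show Smat u v q p = 1
    rw [Smat_symm_apply]; exact h⟩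
  loopless := ⟨fun p h => by
    have h' : Smat u v p p = 1 := h
    rw [Smat_diag] at h'
    exact one_ne_zero h'.symm⟩

lemma adjMat2_graphOf {n : ℕ} (u v : Fin n → ZMod 2) :
    adjMat2 n (graphOf u v) = Smat u v := by
  ext p q
  by_cases h : Smat u v p q = 1
  · simp [adjMat2, graphOf, h]
  · rw [zmod2_eq_zero h]
    simp [adjMat2, graphOf, h]

lemma graphOf_tripartite {n : ℕ} (u v : Fin n → ZMod 2) :
    IsCompleteTripartite n (graphOf u v) := by
  refine ⟨{x | u x = 1 ∧ v x = 1}, {x | u x = 1 ∧ v x = 0}, {x | u x = 0 ∧ v x = 1},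
    ?_, ?_, ?_, ?_⟩
  · rw [Set.disjoint_left]; rintro x ⟨h1, h2⟩ ⟨h3, h4⟩; rw [h2] at h4; exact one_ne_zero h4
  · rw [Set.disjoint_left]; rintro x ⟨h1, h2⟩ ⟨h3, h4⟩; rw [h1] at h3; exact one_ne_zero h3
  · rw [Set.disjoint_left]; rintro x ⟨h1, h2⟩ ⟨h3, h4⟩; rw [h1] at h3; exact one_ne_zero h3
  · intro p q
    show Smat u v p q = 1 ↔ _
    rw [Smat_apply]
    simp only [Set.mem_setOf_eq]
    rcases zmod2_cases (u p) with h1 | h1 <;> rcases zmod2_cases (v p) with h2 | h2 <;>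
      rcases zmod2_cases (u q) with h3 | h3 <;> rcases zmod2_cases (v q) with h4 | h4 <;>
      rw [h1, h2, h3, h4] <;> decide

lemma tripartite_exists_Smat {n : ℕ} (T : SimpleGraph (Fin n))
    (h : IsCompleteTripartite n T) : ∃ u v : Fin n → ZMod 2, adjMat2 n T = Smat u v := by
  classical
  obtain ⟨PA, PB, PC, hAB, hAC, hBC, hadj⟩ := h
  rw [Set.disjoint_left] at hAB hAC hBC
  refine ⟨fun x => if x ∈ PA ∪ PB then 1 else 0, fun x => if x ∈ PA ∪ PC then 1 else 0, ?_⟩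
  ext p q
  show (if T.Adj p q then 1 else 0) = _
  rw [Smat_apply]
  by_cases hpA : p ∈ PA <;> by_cases hpB : p ∈ PB <;> by_cases hpC : p ∈ PC <;>
    by_cases hqA : q ∈ PA <;> by_cases hqB : q ∈ PB <;> by_cases hqC : q ∈ PC <;>
    simp_all [hadj p q, Set.mem_union] <;> decide

end Stmt11

theorem stmt_11 (n : ℕ) (G : SimpleGraph (Fin n)) [DecidableRel G.Adj]
    (A : Matrix (Fin n) (Fin n) (ZMod 2))
    (hA : ∀ p q, A p q = if G.Adj p q then 1 else 0) :
    2 * sInf {t : ℕ | ∃ T : Fin t → SimpleGraph (Fin n),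
        (∀ i, IsCompleteTripartite n (T i)) ∧ A = ∑ i, adjMat2 n (T i)} = A.rank ∧
      Even A.rank := by
  have hsym : ∀ i j, A i j = A j i := by
    intro i j
    by_cases h : G.Adj i j
    · rw [hA, hA, if_pos h, if_pos h.symm]
    · rw [hA, hA, if_neg h, if_neg (fun h' => h h'.symm)]
  have hdiag : ∀ p, A p p = 0 := by
    intro p
    rw [hA, if_neg (G.irrefl)]
  obtain ⟨k, u, v, hk, hsum⟩ := Stmt11.decomp A.rank A hsym hdiag rfl
  set S : Set ℕ := {t : ℕ | ∃ T : Fin t → SimpleGraph (Fin n),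
      (∀ i, IsCompleteTripartite n (T i)) ∧ A = ∑ i, adjMat2 n (T i)} with hS
  have hkS : k ∈ S := by
    refine ⟨fun i => Stmt11.graphOf (u i) (v i), fun i => Stmt11.graphOf_tripartite _ _, ?_⟩
    rw [hsum]
    exact Finset.sum_congr rfl fun i _ => (Stmt11.adjMat2_graphOf _ _).symm
  have hlb : ∀ t ∈ S, k ≤ t := by
    rintro t ⟨T, hT, hsumT⟩
    have h1 : A.rank ≤ 2 * t := by
      rw [hsumT]
      refine le_trans (Stmt11.rank_sum_le _ _) ?_
      calc ∑ i, (adjMat2 n (T i)).rank ≤ ∑ _i : Fin t, 2 := by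
            refine Finset.sum_le_sum fun i _ => ?_
            obtain ⟨ui, vi, hui⟩ := Stmt11.tripartite_exists_Smat _ (hT i)
            rw [hui]
            exact Stmt11.rank_Smat_le _ _
        _ = 2 * t := by simp [mul_comm]
    omega
  have hinf : sInf S = k := le_antisymm (Nat.sInf_le hkS) (le_csInf ⟨k, hkS⟩ hlb)
  rw [hinf]
  exact ⟨hk.symm, ⟨k, by omega⟩⟩
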